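/- arXiv:1204.4925 — 2 statements merged into one kernel-verified Lean document; each statement's English description precedes it below -/
import Mathlib

section
/- Let A₀ be a complex unital Banach algebra and A a semisimple complex unital Banach algebra. Let φ : A₀ → A be a surjective ℂ-linear map satisfying σ(φ(x)·φ(y)·φ(z)) = σ(x·y·z) for all x, y, z ∈ A₀. Then φ(1) lies in the center Z(A) of A, φ(1)³ = 1, and φ(x·y) = φ(1)²·φ(x)·φ(y) for all x, y ∈ A₀. -/
open Metric Set Filter
open scoped ENNReal NNReal

section Aux

variable {A : Type*} [NormedRing A] [NormedAlgebra ℂ A] [CompleteSpace A] [NormOneClass A]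

private lemma aux_nontrivial : Nontrivial A := by
  refine ⟨1, 0, fun h => ?_⟩
  have h1 : ‖(1 : A)‖ = 1 := norm_one
  rw [h, norm_zero] at h1
  exact zero_ne_one h1

/-- If powers are eventually very small, the element is quasinilpotent. -/
private lemma qnil_of_small_pows (y : A)
    (h : ∀ ε : ℝ, 0 < ε → ∃ k : ℕ, ‖y ^ (k + 1)‖ ≤ ε ^ (k + 1)) :
    spectrum ℂ y ⊆ {0} := by
  have hr : spectralRadius ℂ y = 0 := by
    refine le_antisymm ?_ zero_le
    refine ENNReal.le_of_forall_pos_le_add fun ε hε _ => ?_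
    rw [zero_add]
    obtain ⟨k, hk⟩ := h ε (by exact_mod_cast hε)
    have hb := spectrum.spectralRadius_le_pow_nnnorm_pow_one_div ℂ y k
    rw [nnnorm_one, ENNReal.coe_one, ENNReal.one_rpow, mul_one] at hb
    refine hb.trans ?_
    have h1 : (‖y ^ (k + 1)‖₊ : ℝ≥0∞) ≤ ((ε : ℝ≥0∞) ^ (k + 1 : ℕ)) := by
      rw [← ENNReal.coe_pow, ENNReal.coe_le_coe, ← NNReal.coe_le_coe]
      push_cast
      simpa using hk
    calc (‖y ^ (k + 1)‖₊ : ℝ≥0∞) ^ (1 / (k + 1) : ℝ)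
        ≤ ((ε : ℝ≥0∞) ^ (k + 1 : ℕ)) ^ (1 / (k + 1) : ℝ) :=
          ENNReal.rpow_le_rpow h1 (by positivity)
      _ = (ε : ℝ≥0∞) := by
          rw [← ENNReal.rpow_natCast (ε : ℝ≥0∞) (k + 1), ← ENNReal.rpow_mul]
          rw [show (((k + 1 : ℕ) : ℝ) * (1 / (k + 1) : ℝ)) = 1 by
            push_cast
            field_simp]
          exact ENNReal.rpow_one _
  intro lam hlam
  have hle : (‖lam‖₊ : ℝ≥0∞) ≤ spectralRadius ℂ y := le_iSup₂ (α := ℝ≥0∞) lam hlam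
  rw [hr, le_zero_iff, ENNReal.coe_eq_zero, nnnorm_eq_zero] at hle
  simpa using hle

/-- Quasinilpotent elements have eventually small powers. -/
private lemma pow_lt_of_qnil (y : A) (h : spectrum ℂ y ⊆ {0}) {ε : ℝ} (hε : 0 < ε) :
    ∃ N : ℕ, 1 ≤ N ∧ ∀ n, N ≤ n → ‖y ^ n‖ < ε ^ n := by
  have hr : spectralRadius ℂ y = 0 := by
    refine le_antisymm (iSup₂_le fun k hk => ?_) zero_le
    have : k = 0 := by simpa using h hk
    simp [this]
  have ht := spectrum.pow_nnnorm_pow_one_div_tendsto_nhds_spectralRadius y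
  rw [hr] at ht
  have hε' : (0 : ℝ≥0∞) < ENNReal.ofReal ε := by simpa using hε
  have hev := ht.eventually_lt_const hε'
  rw [Filter.eventually_atTop] at hev
  obtain ⟨N, hN⟩ := hev
  refine ⟨max N 1, le_max_right _ _, fun n hn => ?_⟩
  have hn1 : 1 ≤ n := le_trans (le_max_right N 1) hn
  have hNn : N ≤ n := le_trans (le_max_left N 1) hn
  have h2 := hN n hNn
  have hne : ((n : ℝ)) ≠ 0 := by positivity
  have h3 : (‖y ^ n‖₊ : ℝ≥0∞) < (ENNReal.ofReal ε) ^ (n : ℝ) := by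
    have h4 := ENNReal.rpow_lt_rpow h2 (by positivity : (0:ℝ) < (n : ℝ))
    rwa [← ENNReal.rpow_mul, one_div, inv_mul_cancel₀ hne, ENNReal.rpow_one] at h4
  rw [← enorm_eq_nnnorm, ← ofReal_norm_eq_enorm, ENNReal.ofReal_rpow_of_pos hε,
    Real.rpow_natCast] at h3
  rwa [ENNReal.ofReal_lt_ofReal_iff (by positivity)] at h3

/-- The key analytic lemma: if `d * g` is quasinilpotent for every invertible `g`,
then `d * w` is quasinilpotent for every `w`.  (Maximum modulus + Dini.) -/
private lemma qnil_mul (d : A) (hg : ∀ g : A, IsUnit g → spectrum ℂ (d * g) ⊆ {0}) (w : A) :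
    spectrum ℂ (d * w) ⊆ {0} := by
  haveI : Nontrivial A := aux_nontrivial
  set R : ℝ := ‖w‖ + 1 with hR
  have hRpos : 0 < R := by positivity
  set f : ℂ → A := fun t => d * (w - t • (1 : A)) with hf
  have hfq : ∀ t : ℂ, ‖t‖ = R → spectrum ℂ (f t) ⊆ {0} := by
    intro t ht
    refine hg _ ?_
    have htns : t ∉ spectrum ℂ w := by
      intro hmem
      have hb := spectrum.norm_le_norm_of_mem hmem
      rw [ht] at hb
      simp only [hR] at hb
      linarith
    have hunit := spectrum.notMem_iff.mp htns
    have heq : w - t • (1 : A) = -(algebraMap ℂ A t - w) := by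
      rw [Algebra.algebraMap_eq_smul_one]
      abel
    rw [heq]
    exact hunit.neg
  apply qnil_of_small_pows
  intro ε hε
  set U : ℕ → Set ℂ := fun n => {t | ‖f t ^ 2 ^ n‖ < ε ^ 2 ^ n} with hU
  have hUopen : ∀ n, IsOpen (U n) := by
    intro n
    have hcont : Continuous fun t : ℂ => ‖f t ^ 2 ^ n‖ := by
      have hcf : Continuous f :=
        continuous_const.mul (continuous_const.sub (continuous_id.smul continuous_const))
      exact (hcf.pow _).norm
    exact isOpen_lt hcont continuous_const
  have hUmono : Monotone U := by
    apply monotone_nat_of_le_succ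
    intro n t ht
    have h1 : ‖f t ^ 2 ^ n‖ < ε ^ 2 ^ n := ht
    have hεpow : (0:ℝ) < ε ^ 2 ^ n := by positivity
    have hA2 : f t ^ 2 ^ (n + 1) = f t ^ 2 ^ n * f t ^ 2 ^ n := by
      rw [pow_succ, pow_mul, pow_two]
    have hR2 : ε ^ 2 ^ (n + 1) = ε ^ 2 ^ n * ε ^ 2 ^ n := by
      rw [pow_succ, pow_mul, pow_two]
    show ‖f t ^ 2 ^ (n + 1)‖ < ε ^ 2 ^ (n + 1)
    rw [hA2, hR2]
    calc ‖f t ^ 2 ^ n * f t ^ 2 ^ n‖ ≤ ‖f t ^ 2 ^ n‖ * ‖f t ^ 2 ^ n‖ := norm_mul_le _ _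
      _ < ε ^ 2 ^ n * ε ^ 2 ^ n := mul_lt_mul' h1.le h1 (norm_nonneg _) hεpow
  have hcover : sphere (0:ℂ) R ⊆ ⋃ n, U n := by
    intro t ht
    rw [mem_sphere_zero_iff_norm] at ht
    obtain ⟨N, hN1, hNp⟩ := pow_lt_of_qnil (f t) (hfq t ht) hε
    exact mem_iUnion.mpr ⟨N, hNp (2 ^ N) (Nat.lt_two_pow_self (n := N)).le⟩
  obtain ⟨s, hs⟩ := (isCompact_sphere (0:ℂ) R).elim_finite_subcover U hUopen hcover
  set N₀ := s.sup id with hN₀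
  have hsphere : ∀ t : ℂ, ‖t‖ = R → ‖f t ^ 2 ^ N₀‖ ≤ ε ^ 2 ^ N₀ := by
    intro t ht
    have hts : t ∈ ⋃ i ∈ s, U i := hs (by rwa [mem_sphere_zero_iff_norm])
    rw [mem_iUnion₂] at hts
    obtain ⟨i, his, hti⟩ := hts
    exact (hUmono (Finset.le_sup (f := id) his) hti).le
  have hdiff : Differentiable ℂ fun t : ℂ => f t ^ 2 ^ N₀ := by
    apply Differentiable.pow
    exact ((differentiable_const w).sub ((differentiable_id).smul_const (1:A))).const_mul d
  have hmax : ‖f 0 ^ 2 ^ N₀‖ ≤ ε ^ 2 ^ N₀ := by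
    refine Complex.norm_le_of_forall_mem_frontier_norm_le (U := ball (0:ℂ) R)
      isBounded_ball hdiff.diffContOnCl ?_ ?_
    · intro z hz
      rw [frontier_ball (0:ℂ) hRpos.ne'] at hz
      exact hsphere z (mem_sphere_zero_iff_norm.mp hz)
    · rw [closure_ball (0:ℂ) hRpos.ne']
      exact mem_closedBall_self hRpos.le
  have hf0 : f 0 = d * w := by simp [hf]
  rw [hf0] at hmax
  have h2N : 1 ≤ 2 ^ N₀ := Nat.one_le_two_pow
  exact ⟨2 ^ N₀ - 1, by rwa [Nat.sub_add_cancel h2N]⟩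

/-- Sub-lemma E : in a semisimple Banach algebra, `σ(cv) = σ(v)` for all `v` forces `c = 1`. -/
private lemma eq_one_of_spectrum_fix
    (hss : ∀ a : A, (∀ x : A, spectrum ℂ (a * x) = {0}) → a = 0)
    (c : A) (h : ∀ v : A, spectrum ℂ (c * v) = spectrum ℂ v) : c = 1 := by
  haveI : Nontrivial A := aux_nontrivial
  have hc : IsUnit c := by
    have h1 := h 1
    rw [mul_one, spectrum.one_eq] at h1
    have h0 : (0:ℂ) ∉ spectrum ℂ c := by rw [h1]; simp
    exact spectrum.isUnit_of_zero_notMem ℂ h0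
  set c' : A := ↑hc.unit⁻¹ with hc'
  have hcc' : c * c' = 1 := by
    have := hc.unit.mul_inv
    rwa [hc.unit_spec] at this
  have hc'c : c' * c = 1 := by
    have := hc.unit.inv_mul
    rwa [hc.unit_spec] at this
  have hinv : ∀ v : A, IsUnit (1 - v) ↔ IsUnit (1 - c * v) := by
    intro v
    have h1 : ((1:ℂ) ∉ spectrum ℂ v) ↔ IsUnit (1 - v) := by
      rw [spectrum.notMem_iff, map_one]
    have h2 : ((1:ℂ) ∉ spectrum ℂ (c * v)) ↔ IsUnit (1 - c * v) := by
      rw [spectrum.notMem_iff, map_one]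
    rw [← h1, ← h2, h v]
  have key : ∀ H : Aˣ, IsUnit (1 - (1 - c') * ↑H) := by
    intro H
    have hv : IsUnit ((1:A) - (1 - (↑H⁻¹ : A))) := by
      rw [sub_sub_cancel]
      exact (H⁻¹).isUnit
    have h3 : IsUnit (1 - c * (1 - (↑H⁻¹ : A))) := (hinv _).mp hv
    have h5 : IsUnit (c' * ((1 - c * (1 - (↑H⁻¹ : A))) * ↑H)) :=
      ((hc.unit⁻¹).isUnit).mul (h3.mul H.isUnit)
    have heq : (1:A) - (1 - c') * ↑H = c' * ((1 - c * (1 - (↑H⁻¹ : A))) * ↑H) := by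
      have hH : (↑H⁻¹ : A) * ↑H = 1 := H.inv_mul
      have hstep : ((1:A) - (↑H⁻¹:A)) * ↑H = ↑H - 1 := by
        rw [sub_mul, one_mul, hH]
      calc (1:A) - (1 - c') * ↑H
          = c' * ↑H - (c' * c) * (↑H - 1) := by rw [hc'c]; noncomm_ring
        _ = c' * (↑H - c * (↑H - 1)) := by noncomm_ring
        _ = c' * ((1 - c * (1 - (↑H⁻¹ : A))) * ↑H) := by
            rw [sub_mul, one_mul, mul_assoc, hstep]
    rw [heq]
    exact h5
  have key2 : ∀ g : A, IsUnit g → spectrum ℂ ((1 - c') * g) ⊆ {0} := by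
    intro g hgu lam hlam
    rw [Set.mem_singleton_iff]
    by_contra hlamne
    have hsm : IsUnit ((lam⁻¹ : ℂ) • g) := by
      rw [Algebra.smul_def]
      exact ((isUnit_iff_ne_zero.mpr (inv_ne_zero hlamne)).map (algebraMap ℂ A)).mul hgu
    have hkey := key hsm.unit
    rw [hsm.unit_spec] at hkey
    have heq : algebraMap ℂ A lam - (1 - c') * g
        = algebraMap ℂ A lam * (1 - (1 - c') * ((lam⁻¹ : ℂ) • g)) := by
      rw [mul_sub, mul_one, ← Algebra.smul_def]
      congr 1
      rw [← mul_smul_comm, smul_smul, mul_inv_cancel₀ hlamne, one_smul]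
    have hunit : IsUnit (algebraMap ℂ A lam - (1 - c') * g) := by
      rw [heq]
      exact ((isUnit_iff_ne_zero.mpr hlamne).map (algebraMap ℂ A)).mul hkey
    exact (spectrum.notMem_iff.mpr hunit) hlam
  have key3 : ∀ x : A, spectrum ℂ ((1 - c') * x) = {0} := by
    intro x
    have hsub := qnil_mul (1 - c') key2 x
    refine Set.Subset.antisymm hsub fun z hz => ?_
    rw [Set.mem_singleton_iff] at hz
    subst hz
    obtain ⟨μ, hμ⟩ := spectrum.nonempty ((1 - c') * x)
    have h0 := hsub hμ
    rw [Set.mem_singleton_iff] at h0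
    rwa [h0] at hμ
  have hz := hss _ key3
  rw [sub_eq_zero] at hz
  rw [← hcc', ← hz, mul_one]

/-- Left and right almost-invertibility gives invertibility. -/
private lemma isUnit_mid {a b c : A} (h1 : IsUnit (a * b)) (h2 : IsUnit (c * a)) : IsUnit a := by
  have hr : a * (b * ↑h1.unit⁻¹) = 1 := by
    calc a * (b * ↑h1.unit⁻¹) = (a * b) * ↑h1.unit⁻¹ := (mul_assoc _ _ _).symm
      _ = ↑h1.unit * ↑h1.unit⁻¹ := by rw [h1.unit_spec]
      _ = 1 := h1.unit.mul_inv
  have hl : (↑h2.unit⁻¹ * c) * a = 1 := by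
    calc (↑h2.unit⁻¹ * c) * a = ↑h2.unit⁻¹ * (c * a) := mul_assoc _ _ _
      _ = ↑h2.unit⁻¹ * ↑h2.unit := by rw [h2.unit_spec]
      _ = 1 := h2.unit.inv_mul
  have hlr : (↑h2.unit⁻¹ * c : A) = b * ↑h1.unit⁻¹ := by
    calc (↑h2.unit⁻¹ * c : A) = (↑h2.unit⁻¹ * c) * (a * (b * ↑h1.unit⁻¹)) := by
          rw [hr, mul_one]
      _ = ((↑h2.unit⁻¹ * c) * a) * (b * ↑h1.unit⁻¹) := (mul_assoc _ _ _).symm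
      _ = b * ↑h1.unit⁻¹ := by rw [hl, one_mul]
  exact ⟨⟨a, b * ↑h1.unit⁻¹, hr, by rw [← hlr]; exact hl⟩, rfl⟩

/-- From equality of spectra against all elements, with `q` invertible, conclude `p = q`. -/
private lemma eq_of_spectra
    (hss : ∀ a : A, (∀ x : A, spectrum ℂ (a * x) = {0}) → a = 0)
    {p q : A} (hq : IsUnit q)
    (h : ∀ w : A, spectrum ℂ (p * w) = spectrum ℂ (q * w)) : p = q := by
  have hq1 : q * ↑hq.unit⁻¹ = 1 := by
    have := hq.unit.mul_inv
    rwa [hq.unit_spec] at this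
  have hq2 : (↑hq.unit⁻¹ : A) * q = 1 := by
    have := hq.unit.inv_mul
    rwa [hq.unit_spec] at this
  have hone : p * ↑hq.unit⁻¹ = 1 := by
    apply eq_one_of_spectrum_fix hss
    intro v
    rw [mul_assoc, h (↑hq.unit⁻¹ * v), ← mul_assoc, hq1, one_mul]
  calc p = p * (↑hq.unit⁻¹ * q) := by rw [hq2, mul_one]
    _ = (p * ↑hq.unit⁻¹) * q := (mul_assoc _ _ _).symm
    _ = q := by rw [hone, one_mul]

end Aux

/-- Corollary 4.2: Let `φ : A₀ → A` be a surjective linear map into a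
semisimple Banach algebra with `σ(φ(x) φ(y) φ(z)) = σ(x y z)` for all
`x, y, z`. Then `φ(1)` is central, `φ(1)³ = 1`, and
`φ(x y) = φ(1)² φ(x) φ(y)` for all `x, y`. -/
theorem surjective_linear_spectrum_triple_preserver
    {A₀ : Type*} [NormedRing A₀] [NormedAlgebra ℂ A₀] [CompleteSpace A₀] [NormOneClass A₀]
    {A : Type*} [NormedRing A] [NormedAlgebra ℂ A] [CompleteSpace A] [NormOneClass A]
    (hss : ∀ a : A, (∀ x : A, spectrum ℂ (a * x) = {0}) → a = 0)
    (φ : A₀ →ₗ[ℂ] A) (hsur : Function.Surjective φ)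
    (hφ : ∀ x y z : A₀, spectrum ℂ (φ x * φ y * φ z) = spectrum ℂ (x * y * z)) :
    φ 1 ∈ Set.center A ∧ (φ 1) ^ 3 = 1 ∧
      ∀ x y : A₀, φ (x * y) = (φ 1) ^ 2 * (φ x * φ y) := by
  haveI : Nontrivial A := aux_nontrivial
  haveI : Nontrivial A₀ := aux_nontrivial
  have hσ3 : spectrum ℂ (φ 1 * φ 1 * φ 1) = {1} := by
    rw [hφ 1 1 1, mul_one, mul_one, spectrum.one_eq]
  have hU3 : IsUnit (φ 1 * φ 1 * φ 1) := by
    apply spectrum.isUnit_of_zero_notMem ℂ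
    rw [hσ3]; simp
  have hUu : IsUnit (φ 1) := by
    refine isUnit_mid (b := φ 1 * φ 1) (c := φ 1 * φ 1) ?_ hU3
    rw [← mul_assoc]; exact hU3
  have hφunit : ∀ x : A₀, IsUnit x → IsUnit (φ x) := by
    intro x hx
    have h1 : x * ↑hx.unit⁻¹ = 1 := by
      have := hx.unit.mul_inv
      rwa [hx.unit_spec] at this
    have h2 : (↑hx.unit⁻¹ : A₀) * x = 1 := by
      have := hx.unit.inv_mul
      rwa [hx.unit_spec] at this
    have hr : IsUnit (φ x * (φ ↑hx.unit⁻¹ * φ 1)) := by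
      rw [← mul_assoc]
      apply spectrum.isUnit_of_zero_notMem ℂ
      rw [hφ x (↑hx.unit⁻¹) 1, h1, one_mul, spectrum.one_eq]
      simp
    have hl : IsUnit ((φ 1 * φ ↑hx.unit⁻¹) * φ x) := by
      apply spectrum.isUnit_of_zero_notMem ℂ
      rw [show (φ 1 * φ ↑hx.unit⁻¹) * φ x = φ 1 * φ ↑hx.unit⁻¹ * φ x from rfl,
        hφ 1 (↑hx.unit⁻¹) x, one_mul, h2, spectrum.one_eq]
      simp
    exact isUnit_mid hr hl
  have hkey : ∀ x y : A₀, IsUnit x → IsUnit y →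
      φ (x * y) * φ 1 = φ x * φ y ∧ φ 1 * φ (x * y) = φ x * φ y := by
    intro x y hx hy
    have hq : IsUnit (φ x * φ y) := (hφunit x hx).mul (hφunit y hy)
    constructor
    · apply eq_of_spectra hss hq
      intro w
      obtain ⟨z, rfl⟩ := hsur w
      rw [show φ (x * y) * φ 1 * φ z = φ (x * y) * φ 1 * φ z from rfl,
        hφ (x * y) 1 z, mul_one, show φ x * φ y * φ z = φ x * φ y * φ z from rfl,
        hφ x y z]
    · apply eq_of_spectra hss hq
      intro w
      obtain ⟨z, rfl⟩ := hsur w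
      rw [show φ 1 * φ (x * y) * φ z = φ 1 * φ (x * y) * φ z from rfl,
        hφ 1 (x * y) z, one_mul, hφ x y z]
  have hdec : ∀ x : A₀, ∃ s t : A₀, IsUnit s ∧ IsUnit t ∧ s + t = x := by
    intro x
    set lam : ℂ := ((‖x‖ + 1 : ℝ) : ℂ) with hlam
    have hlamne : lam ≠ 0 := by
      rw [hlam]
      exact_mod_cast Complex.ofReal_ne_zero.mpr (by positivity)
    refine ⟨lam • 1, x - lam • 1, ?_, ?_, by abel⟩
    · rw [← Algebra.algebraMap_eq_smul_one]
      exact (isUnit_iff_ne_zero.mpr hlamne).map (algebraMap ℂ A₀)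
    · have hns : lam ∉ spectrum ℂ x := by
        intro hmem
        have hb := spectrum.norm_le_norm_of_mem hmem
        rw [hlam, Complex.norm_real, Real.norm_eq_abs, abs_of_nonneg (by positivity)] at hb
        linarith
      have h := spectrum.notMem_iff.mp hns
      have heq : x - lam • (1:A₀) = -(algebraMap ℂ A₀ lam - x) := by
        rw [Algebra.algebraMap_eq_smul_one]
        abel
      rw [heq]
      exact h.neg
  have hall : ∀ x y : A₀, φ (x * y) * φ 1 = φ x * φ y ∧ φ 1 * φ (x * y) = φ x * φ y := by
    have step1 : ∀ x y : A₀, IsUnit y →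
        φ (x * y) * φ 1 = φ x * φ y ∧ φ 1 * φ (x * y) = φ x * φ y := by
      intro x y hy
      obtain ⟨s, t, hs, ht, hst⟩ := hdec x
      have h1 := hkey s y hs hy
      have h2 := hkey t y ht hy
      rw [← hst]
      constructor
      · rw [add_mul, map_add, add_mul, h1.1, h2.1, map_add, add_mul]
      · rw [add_mul, map_add, mul_add, h1.2, h2.2, map_add, add_mul]
    intro x y
    obtain ⟨s, t, hs, ht, hst⟩ := hdec y
    have h1 := step1 x s hs
    have h2 := step1 x t ht
    rw [← hst]
    constructor
    · rw [mul_add, map_add, add_mul, h1.1, h2.1, map_add, mul_add]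
    · rw [mul_add, map_add, mul_add, h1.2, h2.2, map_add, mul_add]
  have hcomm : ∀ a : A, φ 1 * a = a * φ 1 := by
    intro a
    obtain ⟨z, rfl⟩ := hsur a
    have h := hall z 1
    rw [mul_one] at h
    rw [h.2, ← h.1]
  have hn : φ 1 * φ 1 * φ 1 = 1 := by
    set nn : A := φ 1 * φ 1 * φ 1 - 1 with hnn
    have hσn : spectrum ℂ nn ⊆ {0} := by
      intro lam hlam
      rw [spectrum.mem_iff] at hlam
      rw [Set.mem_singleton_iff]
      have heq : algebraMap ℂ A lam - nn = algebraMap ℂ A (lam + 1) - φ 1 * φ 1 * φ 1 := by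
        rw [map_add, map_one, hnn]
        abel
      rw [heq] at hlam
      have hmem : lam + 1 ∈ spectrum ℂ (φ 1 * φ 1 * φ 1) := spectrum.mem_iff.mpr hlam
      rw [hσ3, Set.mem_singleton_iff] at hmem
      linear_combination hmem
    have hcommn : ∀ w : A, Commute nn w := by
      intro w
      have h1 : Commute (φ 1) w := hcomm w
      exact ((h1.mul_left h1).mul_left h1).sub_left (Commute.one_left w)
    have hq : ∀ w : A, spectrum ℂ (nn * w) = {0} := by
      intro w
      have hsub : spectrum ℂ (nn * w) ⊆ {0} := by
        apply qnil_of_small_pows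
        intro ε hε
        have hwpos : (0:ℝ) < ‖w‖ + 1 := by positivity
        obtain ⟨N, hN1, hNp⟩ := pow_lt_of_qnil nn hσn (ε := ε / (‖w‖ + 1)) (by positivity)
        refine ⟨N - 1, ?_⟩
        rw [Nat.sub_add_cancel hN1]
        have hpow : (nn * w) ^ N = nn ^ N * w ^ N := (hcommn w).mul_pow N
        rw [hpow]
        calc ‖nn ^ N * w ^ N‖ ≤ ‖nn ^ N‖ * ‖w ^ N‖ := norm_mul_le _ _
          _ ≤ (ε / (‖w‖ + 1)) ^ N * (‖w‖ + 1) ^ N := by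
              apply mul_le_mul (hNp N le_rfl).le ?_ (norm_nonneg _) (by positivity)
              calc ‖w ^ N‖ ≤ ‖w‖ ^ N := norm_pow_le _ _
                _ ≤ (‖w‖ + 1) ^ N := pow_le_pow_left₀ (norm_nonneg _) (by linarith) N
          _ = ε ^ N := by
              rw [div_pow, div_mul_eq_mul_div, mul_div_assoc, div_self (by positivity), mul_one]
      refine Set.Subset.antisymm hsub fun z hz => ?_
      rw [Set.mem_singleton_iff] at hz
      subst hz
      obtain ⟨μ, hμ⟩ := spectrum.nonempty (nn * w)
      have h0 := hsub hμ
      rw [Set.mem_singleton_iff] at h0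
      rwa [h0] at hμ
    have h0 := hss nn hq
    rw [hnn, sub_eq_zero] at h0
    exact h0
  refine ⟨Semigroup.mem_center_iff.mpr fun g => (hcomm g).symm, ?_, ?_⟩
  · rw [pow_succ, pow_two]
    exact hn
  · intro x y
    have h1 := (hall x y).1
    have h2 : φ (x * y) * (φ 1 * φ 1 * φ 1) = (φ x * φ y) * (φ 1 * φ 1) := by
      calc φ (x * y) * (φ 1 * φ 1 * φ 1)
          = (φ (x * y) * φ 1) * (φ 1 * φ 1) := by noncomm_ring
        _ = (φ x * φ y) * (φ 1 * φ 1) := by rw [h1]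
    rw [hn, mul_one] at h2
    rw [h2, pow_two]
    have c1 : Commute (φ 1) (φ x * φ y) := hcomm (φ x * φ y)
    exact (c1.mul_left c1).eq.symm
end

section
/- Let A₀ be a complex unital Banach algebra and A a unital C*-algebra. Let φ : A₀ → A be a surjective map (not assumed linear) satisfying σ(φ(x)·φ(y)·φ(z)) = σ(x·y·z) for all x, y, z ∈ A₀. Then φ(1) lies in the center Z(A) of A, φ(1)³ = 1, and φ(x·y) = φ(1)²·φ(x)·φ(y) for all x, y ∈ A₀. -/
/-
**Corollary 4.3.** A surjective map `φ : A₀ → A` from a unital complex Banach algebra onto a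
unital C*-algebra satisfying `σ(φ(x) φ(y) φ(z)) = σ(x y z)` for all `x, y, z` has `φ 1`
central with `(φ 1) ^ 3 = 1`, and `φ (x y) = (φ 1) ^ 2 * (φ x * φ y)` for all `x, y`.

The key auxiliary result, proved from scratch below (`SSTPCAux.cancel`), is a cancellation
theorem: if `P, Q` in a C*-algebra satisfy `σ (P b) = σ (Q b)` and `σ (b P) = σ (b Q)` for
all `b`, then `P = Q`.  It is proved by showing `P*P = Q*Q` and `PP* = QQ*` (via a
positivity/resolvent argument, `pos_le_of_spectra`), and then that the mixed Gram element
`N = P*Q` is normal with nonnegative real spectrum satisfying `N² = (P*P)²`, whence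
`N = P*P` by uniqueness of positive square roots, and `(P−Q)*(P−Q) = 2 P*P − N − N* = 0`.
-/

namespace SSTPCAux

open scoped NNReal ENNReal Pointwise

variable {A : Type*} [CStarAlgebra A]

local notation "σ" => spectrum ℂ

/-- A normal element whose spectrum is contained in `{0}` is zero. -/
lemma eq_zero_of_spectrum_subset_zero (a : A) (hn : IsStarNormal a) (h : σ a ⊆ {0}) :
    a = 0 := by
  have h1 : spectralRadius ℂ a = 0 := by
    rw [spectralRadius]
    refine le_antisymm (iSup₂_le fun k hk => ?_) (zero_le)
    have : k = (0 : ℂ) := h hk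
    simp [this]
  have h2 := (IsStarNormal.spectralRadius_eq_nnnorm a).symm.trans h1
  have : ‖a‖₊ = 0 := by exact_mod_cast h2
  simpa using this

/-- A normal element whose spectrum is contained in `{1}` is one. -/
lemma eq_one_of_spectrum_subset_one (a : A) (hn : IsStarNormal (a - 1))
    (h : σ a ⊆ {1}) : a = 1 := by
  have h3 := spectrum.sub_singleton_eq a (1 : ℂ)
  rw [map_one] at h3
  have hsp : σ (a - 1) ⊆ {0} := by
    rw [← h3]
    intro z hz
    obtain ⟨u, hu, v, hv, rfl⟩ := Set.mem_sub.mp hz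
    have hu1 : u = 1 := h hu
    have hv1 : v = 1 := hv
    simp [hu1, hv1]
  have := eq_zero_of_spectrum_subset_zero _ hn hsp
  rwa [sub_eq_zero] at this

/-- If `σ (v * t) = σ t` for all `t` in a C*-algebra, then `v = 1`. -/
lemma eq_one_of_forall_spectrum_mul_eq (v : A) (hv : ∀ t : A, σ (v * t) = σ t) :
    v = 1 := by
  rcases subsingleton_or_nontrivial A with h | h
  · exact Subsingleton.elim _ _
  have hv1 : σ v = {1} := by simpa [spectrum.one_eq] using hv 1
  have hvu : IsUnit v := by
    rw [← spectrum.zero_notMem_iff ℂ, hv1]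
    simp
  have hvv : σ (v * star v) = {1} := by
    rw [hv (star v), spectrum.map_star, hv1]
    rw [Set.star_singleton, star_one]
  have h2 : v * star v = 1 := by
    have hsa : IsSelfAdjoint (v * star v - 1) :=
      (IsSelfAdjoint.mul_star_self v).sub (IsSelfAdjoint.one A)
    exact eq_one_of_spectrum_subset_one _ hsa.isStarNormal (le_of_eq hvv)
  obtain ⟨u, rfl⟩ := hvu
  have hst : star (u : A) = ↑u⁻¹ := by
    have : (↑u⁻¹ : A) * (↑u * star (u : A)) = ↑u⁻¹ := by rw [h2, mul_one]
    rwa [← mul_assoc, Units.inv_mul, one_mul] at this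
  have h2' : star (u : A) * u = 1 := by rw [hst, Units.inv_mul]
  have hcomm : star (u : A) * u = (u : A) * star (u : A) := by rw [h2', h2]
  have hn : IsStarNormal ((u : A) - 1) := by
    constructor
    show star ((u : A) - 1) * ((u : A) - 1) = ((u : A) - 1) * star ((u : A) - 1)
    rw [star_sub, star_one]
    noncomm_ring
    rw [hcomm]
    abel
  exact eq_one_of_spectrum_subset_one _ hn (le_of_eq hv1)

lemma isUnit_of_sq {s : A} (h : IsUnit (s * s)) : IsUnit s := by
  obtain ⟨w, hw⟩ := h
  have hr : s * (s * ↑w⁻¹) = 1 := by rw [← mul_assoc, ← hw, Units.mul_inv]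
  have hl : (↑w⁻¹ * s) * s = 1 := by rw [mul_assoc, ← hw, Units.inv_mul]
  have hlr : (↑w⁻¹ * s : A) = s * ↑w⁻¹ := by
    calc (↑w⁻¹ * s : A) = (↑w⁻¹ * s) * (s * (s * ↑w⁻¹)) := by rw [hr, mul_one]
      _ = ((↑w⁻¹ * s) * s) * (s * ↑w⁻¹) := by simp only [mul_assoc]
      _ = s * ↑w⁻¹ := by rw [hl, one_mul]
  exact ⟨⟨s, s * ↑w⁻¹, hr, by rw [← hlr]; exact hl⟩, rfl⟩


section WithOrder

variable [PartialOrder A] [StarOrderedRing A]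

lemma pos_le_of_spectra [Nontrivial A] (X Y : A) (hX : 0 ≤ X) (hY : 0 ≤ Y)
    (h : ∀ t : A, σ (Y * t) \ {0} ⊆ σ (X * t) ∪ {0}) : Y ≤ X := by
  have key : ∀ ε : ℝ, 0 < ε → Y ≤ X + algebraMap ℝ A ε := by
    intro ε hε
    have hεA : (0 : A) ≤ algebraMap ℝ A ε := by
      have h2 : star (algebraMap ℝ A (Real.sqrt ε)) = algebraMap ℝ A (Real.sqrt ε) := by
        rw [← algebraMap_star_comm, star_trivial]
      calc (0 : A) ≤ star (algebraMap ℝ A (Real.sqrt ε)) * algebraMap ℝ A (Real.sqrt ε) :=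
            star_mul_self_nonneg _
        _ = algebraMap ℝ A ε := by rw [h2, ← map_mul, Real.mul_self_sqrt hε.le]
    set a : A := X + algebraMap ℝ A ε with ha_def
    have ha_nonneg : 0 ≤ a := add_nonneg hX hεA
    have ha_unit : IsUnit a := by
      refine (fun hu hle => CStarAlgebra.isUnit_of_le _ hle ⟨hεA, hu⟩) ?_ ?_
      · exact (isUnit_iff_ne_zero.mpr hε.ne').map (algebraMap ℝ A)
      · exact le_add_of_nonneg_left hX
    set s : A := CFC.sqrt a with hs_def
    have hs_nonneg : 0 ≤ s := CFC.sqrt_nonneg (a := a)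
    have hs_sa : IsSelfAdjoint s := .of_nonneg hs_nonneg
    have hs_sq : s * s = a := by
      have h3 := CFC.sq_sqrt a ha_nonneg
      rwa [pow_two] at h3
    have hs_unit : IsUnit s := isUnit_of_sq (by rw [hs_sq]; exact ha_unit)
    obtain ⟨us, hus⟩ := hs_unit
    set u : A := ↑us⁻¹ with hu_def
    have hu_s : u * s = 1 := by rw [hu_def, ← hus, Units.inv_mul]
    have hs_u : s * u = 1 := by rw [hu_def, ← hus, Units.mul_inv]
    have hu_sa : star u = u := by
      have h1 : star u * s = 1 := by
        calc star u * s = star u * star s := by rw [hs_sa.star_eq]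
          _ = star (s * u) := (star_mul _ _).symm
          _ = 1 := by rw [hs_u, star_one]
      calc star u = star u * (s * u) := by rw [hs_u, mul_one]
        _ = (star u * s) * u := by rw [mul_assoc]
        _ = u := by rw [h1, one_mul]
    have hXa : X ≤ a := le_add_of_nonneg_right hεA
    have huau : u * a * u = 1 := by
      calc u * a * u = u * (s * s) * u := by rw [hs_sq]
        _ = (u * s) * (s * u) := by simp only [mul_assoc]
        _ = 1 := by rw [hu_s, hs_u, mul_one]
    set V : A := u * X * u with hV_def
    set W : A := u * Y * u with hW_def
    have hV_nonneg : 0 ≤ V := by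
      have := star_left_conjugate_nonneg hX u
      rwa [hu_sa, ← hV_def] at this
    have hW_nonneg : 0 ≤ W := by
      have := star_left_conjugate_nonneg hY u
      rwa [hu_sa, ← hW_def] at this
    have hV_le_one : V ≤ 1 := by
      have h4 := star_left_conjugate_le_conjugate hXa u
      rw [hu_sa] at h4
      calc V ≤ u * a * u := h4
        _ = 1 := huau
    -- spectra via conjugation
    have hVc : σ V = σ (X * (u * u)) := by
      have h5 : (↑us⁻¹ : A) * (X * (u * u)) * ↑(us⁻¹)⁻¹ = V := by
        rw [inv_inv, hus]
        calc u * (X * (u * u)) * s = u * X * ((u * (u * s))) := by simp only [mul_assoc]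
          _ = V := by rw [hu_s, mul_one, hV_def]
      rw [← h5, spectrum.units_conjugate]
    have hWc : σ W = σ (Y * (u * u)) := by
      have h5 : (↑us⁻¹ : A) * (Y * (u * u)) * ↑(us⁻¹)⁻¹ = W := by
        rw [inv_inv, hus]
        calc u * (Y * (u * u)) * s = u * Y * ((u * (u * s))) := by simp only [mul_assoc]
          _ = W := by rw [hu_s, mul_one, hW_def]
      rw [← h5, spectrum.units_conjugate]
    have hσ : σ W \ {0} ⊆ σ V ∪ {0} := by
      rw [hVc, hWc]
      exact h (u * u)
    have hVnorm : ‖V‖ ≤ 1 := by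
      rw [CStarAlgebra.norm_le_iff_le_algebraMap V zero_le_one hV_nonneg, map_one]
      exact hV_le_one
    have hWnorm : ‖W‖ ≤ 1 := by
      rcases eq_or_ne ‖W‖ 0 with h0 | hne
      · rw [h0]; exact zero_le_one
      · have h2 : ‖W‖ ∈ spectrum ℝ W := CStarAlgebra.norm_mem_spectrum_of_nonneg hW_nonneg
        have h3 : ((‖W‖ : ℝ) : ℂ) ∈ σ W :=
          (IsSelfAdjoint.coe_mem_spectrum_complex (.of_nonneg hW_nonneg)).mpr h2
        have h4 : ((‖W‖ : ℝ) : ℂ) ∈ σ V ∪ {0} := by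
          refine hσ ⟨h3, ?_⟩
          simp only [Set.mem_singleton_iff]
          exact_mod_cast hne
        rcases h4 with h5 | h5
        · have h6 : ‖W‖ ∈ spectrum ℝ V :=
            (IsSelfAdjoint.coe_mem_spectrum_complex (.of_nonneg hV_nonneg)).mp h5
          have h7 := spectrum.norm_le_norm_of_mem h6
          rw [Real.norm_eq_abs, abs_of_nonneg (norm_nonneg W)] at h7
          exact h7.trans hVnorm
        · exfalso
          rw [Set.mem_singleton_iff] at h5
          exact hne (by exact_mod_cast h5)
    have hW_le_one : W ≤ 1 := by
      have := (CStarAlgebra.norm_le_iff_le_algebraMap W zero_le_one hW_nonneg).mp hWnorm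
      rwa [map_one] at this
    have hYsWs : s * W * s = Y := by
      calc s * (u * Y * u) * s = (s * u) * Y * (u * s) := by simp only [mul_assoc]
        _ = Y := by rw [hu_s, hs_u, one_mul, mul_one]
    calc Y = s * W * s := hYsWs.symm
      _ ≤ s * 1 * s := by
          have h8 := star_left_conjugate_le_conjugate hW_le_one s
          rwa [hs_sa.star_eq] at h8
      _ = a := by rw [mul_one, hs_sq]
  -- take the limit ε → 0
  have hZ : IsSelfAdjoint (Y - X) := (IsSelfAdjoint.of_nonneg hY).sub (.of_nonneg hX)
  have hspec : ∀ μ ∈ spectrum ℝ (Y - X), μ ≤ 0 := by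
    intro μ hμ
    by_contra hpos
    push_neg at hpos
    have h8 : Y - X ≤ algebraMap ℝ A (μ / 2) := by
      rw [sub_le_iff_le_add, add_comm]
      exact key (μ / 2) (by linarith)
    have h9 := (le_algebraMap_iff_spectrum_le (R := ℝ) (a := Y - X) hZ).mp h8 μ hμ
    linarith
  have h10 : Y - X ≤ algebraMap ℝ A 0 :=
    (le_algebraMap_iff_spectrum_le hZ).mpr hspec
  rw [map_zero] at h10
  exact sub_nonpos.mp h10

/-- The Gram elements of a two-sided spectrally equivalent pair agree. -/
lemma gram_eq [Nontrivial A] (P Q : A)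
    (hR : ∀ b : A, σ (P * b) = σ (Q * b))
    (hL : ∀ b : A, σ (b * P) = σ (b * Q)) :
    star P * P = star Q * Q := by
  have hRs : ∀ b : A, σ (star P * b) = σ (star Q * b) := by
    intro b
    have h1 : star P * b = star (star b * P) := by rw [star_mul, star_star]
    have h2 : star Q * b = star (star b * Q) := by rw [star_mul, star_star]
    rw [h1, h2, spectrum.map_star, spectrum.map_star, hL (star b)]
  have chain : ∀ t : A, σ (star P * P * t) \ {0} = σ (star Q * Q * t) \ {0} := by
    intro t
    calc σ (star P * P * t) \ {0}
        = σ (star P * (P * t)) \ {0} := by rw [mul_assoc]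
      _ = σ (star Q * (P * t)) \ {0} := by rw [hRs (P * t)]
      _ = σ ((P * t) * star Q) \ {0} := spectrum.nonzero_mul_comm _ _
      _ = σ (P * (t * star Q)) \ {0} := by rw [mul_assoc]
      _ = σ (Q * (t * star Q)) \ {0} := by rw [hR (t * star Q)]
      _ = σ ((t * star Q) * Q) \ {0} := spectrum.nonzero_mul_comm _ _
      _ = σ (t * (star Q * Q)) \ {0} := by rw [mul_assoc]
      _ = σ (star Q * Q * t) \ {0} := spectrum.nonzero_mul_comm _ _
  have hle : star Q * Q ≤ star P * P := by
    refine pos_le_of_spectra _ _ (star_mul_self_nonneg P) (star_mul_self_nonneg Q) fun t => ?_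
    rw [← chain t]
    exact (Set.diff_subset).trans Set.subset_union_left
  have hge : star P * P ≤ star Q * Q := by
    refine pos_le_of_spectra _ _ (star_mul_self_nonneg Q) (star_mul_self_nonneg P) fun t => ?_
    rw [chain t]
    exact (Set.diff_subset).trans Set.subset_union_left
  exact le_antisymm hge hle

end WithOrder

open ComplexOrder in
/-- The cancellation lemma: a two-sided spectrally equivalent pair in a C*-algebra is equal. -/
lemma cancel (P Q : A)
    (hR : ∀ b : A, σ (P * b) = σ (Q * b))
    (hL : ∀ b : A, σ (b * P) = σ (b * Q)) : P = Q := by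
  rcases subsingleton_or_nontrivial A with h | h
  · exact Subsingleton.elim _ _
  letI : PartialOrder A := CStarAlgebra.spectralOrder A
  haveI : StarOrderedRing A := CStarAlgebra.spectralOrderedRing A
  -- star relations
  have hRs : ∀ b : A, σ (star P * b) = σ (star Q * b) := by
    intro b
    have h1 : star P * b = star (star b * P) := by rw [star_mul, star_star]
    have h2 : star Q * b = star (star b * Q) := by rw [star_mul, star_star]
    rw [h1, h2, spectrum.map_star, spectrum.map_star, hL (star b)]
  have hLs : ∀ b : A, σ (b * star P) = σ (b * star Q) := by
    intro b
    have h1 : b * star P = star (P * star b) := by rw [star_mul, star_star]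
    have h2 : b * star Q = star (Q * star b) := by rw [star_mul, star_star]
    rw [h1, h2, spectrum.map_star, spectrum.map_star, hR (star b)]
  -- Gram identities
  have hX : star P * P = star Q * Q := gram_eq P Q hR hL
  have hY : P * star P = Q * star Q := by
    have := gram_eq (star P) (star Q) hRs hLs
    rwa [star_star, star_star] at this
  -- the mixed Gram element
  set N : A := star P * Q with hN_def
  have hNt : ∀ t : A, σ (N * t) = σ (star Q * Q * t) := by
    intro t
    rw [hN_def, mul_assoc, mul_assoc]
    exact hRs (Q * t)
  have h_star_N : star N = star Q * P := by rw [hN_def, star_mul, star_star]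
  have hNN : star N * N = (star Q * Q) * (star Q * Q) := by
    calc star N * N = star Q * (P * star P) * Q := by
          rw [h_star_N, hN_def]; simp only [mul_assoc]
      _ = star Q * (Q * star Q) * Q := by rw [hY]
      _ = (star Q * Q) * (star Q * Q) := by simp only [mul_assoc]
  have hNN' : N * star N = (star Q * Q) * (star Q * Q) := by
    calc N * star N = star P * (Q * star Q) * P := by
          rw [h_star_N, hN_def]; simp only [mul_assoc]
      _ = star P * (P * star P) * P := by rw [hY]
      _ = (star P * P) * (star P * P) := by simp only [mul_assoc]
      _ = (star Q * Q) * (star Q * Q) := by rw [hX]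
  haveI hNnormal : IsStarNormal N := ⟨by rw [Commute, SemiconjBy, hNN, hNN']⟩
  -- spectrum of N is real and nonnegative
  have hNspec : σ N = σ (star Q * Q) := by simpa using hNt 1
  have hspec_nonneg : ∀ z ∈ σ N, 0 ≤ z := by
    rw [hNspec]
    exact spectrum_nonneg_of_nonneg (star_mul_self_nonneg Q)
  -- N is selfadjoint
  have hNsa : IsSelfAdjoint N := by
    rw [IsSelfAdjoint]
    conv_rhs => rw [← cfc_id ℂ N]
    conv_lhs => rw [← cfc_id ℂ N]
    rw [← cfc_star]
    refine cfc_congr fun z hz => ?_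
    have h0 := hspec_nonneg z hz
    have him : z.im = 0 := by
      rw [Complex.le_def] at h0
      simpa using h0.2.symm
    rw [Complex.star_def, Complex.conj_eq_iff_im]
    exact him
  have hNnonneg : 0 ≤ N := by
    rw [StarOrderedRing.nonneg_iff_spectrum_nonneg (R := ℝ) N hNsa]
    intro x hx
    have h1 : ((x : ℝ) : ℂ) ∈ σ N := (IsSelfAdjoint.coe_mem_spectrum_complex hNsa).mpr hx
    have h2 := hspec_nonneg _ h1
    exact_mod_cast h2
  -- N = star Q * Q by uniqueness of positive square roots
  have hNsq : N ^ 2 = (star Q * Q) ^ 2 := by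
    rw [pow_two, pow_two]
    calc N * N = star N * N := by rw [hNsa.star_eq]
      _ = (star Q * Q) * (star Q * Q) := hNN
  have hNfinal : N = star Q * Q := by
    have h1 := CFC.sqrt_sq N hNnonneg
    have h2 := CFC.sqrt_sq (star Q * Q) (star_mul_self_nonneg Q)
    rw [← h1, hNsq, h2]
  -- conclude : star (P - Q) * (P - Q) = 0
  have h3 : star Q * P = star Q * Q := by
    have h4 := congrArg star hNfinal
    rwa [h_star_N, (IsSelfAdjoint.star_mul_self Q : IsSelfAdjoint (star Q * Q)).star_eq] at h4
  have h5 : star P * Q = star Q * Q := hNfinal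
  have hcc : star (P - Q) * (P - Q) = 0 := by
    have expand : star (P - Q) * (P - Q) =
        star P * P - star P * Q - star Q * P + star Q * Q := by
      rw [star_sub]; noncomm_ring
    rw [expand, hX, h5, h3]
    abel
  have h6 : P - Q = 0 := by
    rw [← CStarRing.star_mul_self_eq_zero_iff (P - Q)]
    exact hcc
  exact sub_eq_zero.mp h6


end SSTPCAux

/-- Corollary 4.3: Let `φ : A₀ → A` be a surjective map from a Banach algebra
onto a C*-algebra with `σ(φ(x) φ(y) φ(z)) = σ(x y z)` for all `x, y, z`. Then
`φ(1)` is central, `φ(1)³ = 1`, and `φ(x y) = φ(1)² φ(x) φ(y)` for all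
`x, y`. -/
theorem surjective_spectrum_triple_preserver_cstar
    {A₀ : Type*} [NormedRing A₀] [NormedAlgebra ℂ A₀] [CompleteSpace A₀] [NormOneClass A₀]
    {A : Type*} [NormedRing A] [StarRing A] [CStarRing A] [CompleteSpace A]
    [NormedAlgebra ℂ A] [StarModule ℂ A]
    (φ : A₀ → A) (hsur : Function.Surjective φ)
    (hφ : ∀ x y z : A₀, spectrum ℂ (φ x * φ y * φ z) = spectrum ℂ (x * y * z)) :
    φ 1 ∈ Set.center A ∧ (φ 1) ^ 3 = 1 ∧
      ∀ x y : A₀, φ (x * y) = (φ 1) ^ 2 * (φ x * φ y) := by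
  letI : CStarAlgebra A := ⟨⟩
  rcases subsingleton_or_nontrivial A with hA | hA
  · exact ⟨Semigroup.mem_center_iff.mpr fun g => Subsingleton.elim _ _,
      Subsingleton.elim _ _, fun x y => Subsingleton.elim _ _⟩
  haveI : NormOneClass A := inferInstance
  haveI : Nontrivial A₀ := by
    refine ⟨⟨1, 0, fun h => ?_⟩⟩
    have h1 : ‖(1 : A₀)‖ = 1 := norm_one
    rw [h, norm_zero] at h1
    exact zero_ne_one h1
  set e : A := φ 1 with he
  -- spectrum of e³ is {1}
  have he3 : spectrum ℂ (e * e * e) = {1} := by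
    have h := hφ 1 1 1
    rw [one_mul, mul_one] at h
    rw [← he] at h
    rw [h, spectrum.one_eq]
  -- e is invertible
  have heU3 : IsUnit (e * e * e) := by
    rw [← spectrum.zero_notMem_iff ℂ, he3]
    simp
  have heU : IsUnit e := by
    obtain ⟨u, hu⟩ := heU3
    have hr : e * ((e * e) * ↑u⁻¹) = 1 := by
      rw [← mul_assoc, ← mul_assoc e e e, ← hu, Units.mul_inv]
    have hl : (↑u⁻¹ * (e * e)) * e = 1 := by
      rw [mul_assoc, ← hu, Units.inv_mul]
    have hlr : (↑u⁻¹ * (e * e)) = ((e * e) * ↑u⁻¹) := by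
      calc (↑u⁻¹ * (e * e) : A) = ↑u⁻¹ * (e * e) * (e * ((e * e) * ↑u⁻¹)) := by
            rw [hr, mul_one]
        _ = (↑u⁻¹ * (e * e) * e) * ((e * e) * ↑u⁻¹) := by
            rw [mul_assoc (↑u⁻¹ * (e * e)) e ((e * e) * ↑u⁻¹)]
        _ = (e * e) * ↑u⁻¹ := by rw [hl, one_mul]
    exact ⟨⟨e, (e * e) * ↑u⁻¹, hr, by rw [← hlr]; exact hl⟩, rfl⟩
  obtain ⟨ue, hue⟩ := heU
  -- the fundamental swap relation
  have hswap : ∀ a b : A, spectrum ℂ (e * a * b) = spectrum ℂ (a * e * b) := by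
    intro a b
    obtain ⟨x, rfl⟩ := hsur a
    obtain ⟨y, rfl⟩ := hsur b
    have h1 := hφ 1 x y
    have h2 := hφ x 1 y
    rw [one_mul] at h1
    rw [mul_one] at h2
    rw [← he] at h1 h2
    rw [h1, h2]
  -- e commutes with every unit
  have hcu : ∀ v : Aˣ, e * ↑v = ↑v * e := by
    intro v
    have hvt : ∀ t : A, spectrum ℂ ((e * ↑v * ↑ue⁻¹ * ↑v⁻¹) * t) = spectrum ℂ t := by
      intro t
      have h1 : (e * ↑v * ↑ue⁻¹ * ↑v⁻¹) * t = e * ↑v * (↑ue⁻¹ * (↑v⁻¹ * t)) := by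
        simp only [mul_assoc]
      have h2 : (↑v : A) * e * (↑ue⁻¹ * (↑v⁻¹ * t)) = t := by
        rw [← hue]
        rw [mul_assoc (↑v : A) ↑ue _, ← mul_assoc (↑ue : A) ↑ue⁻¹ _, Units.mul_inv, one_mul,
          Units.mul_inv_cancel_left]
      rw [h1, hswap ↑v (↑ue⁻¹ * (↑v⁻¹ * t)), h2]
    have h3 := SSTPCAux.eq_one_of_forall_spectrum_mul_eq _ hvt
    -- convert to units
    have h4 : (↑(ue * v * ue⁻¹ * v⁻¹) : A) = e * ↑v * ↑ue⁻¹ * ↑v⁻¹ := by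
      simp [hue]
    have h5 : ue * v * ue⁻¹ * v⁻¹ = 1 := Units.ext (by rw [h4, h3, Units.val_one])
    have h6 : ue * v = v * ue := by
      have h7 := mul_inv_eq_one.mp h5
      have h8 := mul_inv_eq_iff_eq_mul.mp h7
      exact h8
    calc e * ↑v = ↑(ue * v) := by rw [Units.val_mul, hue]
      _ = ↑(v * ue) := by rw [h6]
      _ = ↑v * e := by rw [Units.val_mul, hue]
  -- e commutes with everything
  have hc : ∀ b : A, e * b = b * e := by
    intro b
    set c : ℂ := ((‖b‖ + 1 : ℝ) : ℂ) with hcdef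
    have hnotmem : c ∉ spectrum ℂ b := by
      intro hmem
      have h1 := spectrum.norm_le_norm_of_mem hmem
      have h2 : ‖c‖ = ‖b‖ + 1 := by
        rw [hcdef, Complex.norm_real, Real.norm_eq_abs, abs_of_nonneg]
        positivity
      rw [h2] at h1
      linarith
    have hu1 : IsUnit (algebraMap ℂ A c - b) := spectrum.notMem_iff.mp hnotmem
    obtain ⟨v, hv⟩ := hu1
    have h1 : e * ↑v = ↑v * e := hcu v
    rw [hv] at h1
    have h2 : e * algebraMap ℂ A c = algebraMap ℂ A c * e := (Algebra.commutes c e).symm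
    rw [mul_sub, sub_mul, h2] at h1
    exact sub_right_injective h1
  have hce : ∀ x : A, Commute e x := fun x => hc x
  -- first conclusion
  have hcenter : e ∈ Set.center A := Semigroup.mem_center_iff.mpr fun g => (hc g).symm
  -- e³ = 1
  have hf : e * e * e = 1 := by
    have h2 : Commute (star (e * e * e)) (e * e * e) :=
      (((hce (star (e * e * e))).mul_left (hce (star (e * e * e)))).mul_left
        (hce (star (e * e * e)))).symm
    have hn : IsStarNormal (e * e * e - 1) := by
      refine ⟨?_⟩
      rw [star_sub, star_one]
      exact (h2.sub_right (Commute.one_right _)).sub_left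
        ((Commute.one_left _).sub_right (Commute.one_right _))
    exact SSTPCAux.eq_one_of_spectrum_subset_one _ hn he3.le
  have hf' : e * (e * e) = 1 := by rw [← mul_assoc]; exact hf
  have hcube : (φ 1) ^ 3 = 1 := by
    have h1 : (φ 1) ^ 3 = e * e * e := by
      rw [← he, pow_succ, pow_succ, pow_one]
    rw [h1, hf]
  refine ⟨hcenter, hcube, fun x y => ?_⟩
  -- the pair relation
  have hi : ∀ b : A, spectrum ℂ (φ (x * y) * b * e) = spectrum ℂ (φ x * φ y * b) := by
    intro b
    obtain ⟨w, rfl⟩ := hsur b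
    have h1 := hφ (x * y) w 1
    rw [mul_one] at h1
    rw [← he] at h1
    have h2 := hφ x y w
    rw [h1, h2]
  have hpair : ∀ b : A, spectrum ℂ (φ (x * y) * b) =
      spectrum ℂ ((e * e * (φ x * φ y)) * b) := by
    intro b
    have h3 := hi (b * e * e)
    have h4 : φ (x * y) * (b * e * e) * e = φ (x * y) * b := by
      calc φ (x * y) * (b * e * e) * e = φ (x * y) * (b * (e * (e * e))) := by
            simp only [mul_assoc]
        _ = φ (x * y) * b := by rw [hf', mul_one]
    have hb : b * e * e = e * e * b := by
      calc b * e * e = e * b * e := by rw [(hce b).eq]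
        _ = e * (b * e) := by rw [mul_assoc]
        _ = e * (e * b) := by rw [(hce b).eq]
        _ = e * e * b := by rw [mul_assoc]
    have h5 : φ x * φ y * (b * e * e) = (e * e * (φ x * φ y)) * b := by
      have hq : Commute (e * e) (φ x * φ y) := (hce _).mul_left (hce _)
      calc φ x * φ y * (b * e * e) = φ x * φ y * (e * e * b) := by rw [hb]
        _ = φ x * φ y * (e * e) * b := by simp only [mul_assoc]
        _ = (e * e) * (φ x * φ y) * b := by rw [← hq.eq]
    rw [h4, h5] at h3
    exact h3
  -- the left-sided pair relation
  have hiL : ∀ b : A, spectrum ℂ (b * φ (x * y) * e) = spectrum ℂ (b * (φ x * φ y)) := by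
    intro b
    obtain ⟨w, rfl⟩ := hsur b
    have h1 := hφ w (x * y) 1
    rw [mul_one] at h1
    rw [← he] at h1
    rw [← mul_assoc] at h1
    have h2 := hφ w x y
    rw [h1, ← h2]
    rw [mul_assoc]
  have hpairL : ∀ b : A, spectrum ℂ (b * φ (x * y)) =
      spectrum ℂ (b * (e * e * (φ x * φ y))) := by
    intro b
    have h3 := hiL (b * e * e)
    have h4 : b * e * e * φ (x * y) * e = b * φ (x * y) := by
      calc b * e * e * φ (x * y) * e
          = b * (e * (e * (φ (x * y) * e))) := by simp only [mul_assoc]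
        _ = b * (e * (e * (e * φ (x * y)))) := by rw [← (hce (φ (x * y))).eq]
        _ = b * ((e * (e * e)) * φ (x * y)) := by simp only [mul_assoc]
        _ = b * φ (x * y) := by rw [hf', one_mul]
    have h5 : b * e * e * (φ x * φ y) = b * (e * e * (φ x * φ y)) := by
      simp only [mul_assoc]
    rw [h4, h5] at h3
    exact h3
  have hPQ := SSTPCAux.cancel _ _ hpair hpairL
  rw [hPQ, pow_two]
end
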